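/- Let G be a König-Egerváry graph. Then ξ(G) + η(G) ≤ α(G), σ(G) + η(G) ≤ μ(G), and ξ(G) + 2η(G) + σ(G) ≤ |V(G)|. -/

import Mathlib

open scoped Classical

namespace KEG

variable {V : Type*}

/-- `S` is a stable (independent) set of vertices of `G`. -/
def IsStable (G : SimpleGraph V) (S : Finset V) : Prop :=
  ∀ ⦃x⦄, x ∈ S → ∀ ⦃y⦄, y ∈ S → ¬G.Adj x y

/-- The stability number `α(G)`: maximum cardinality of a stable set. -/
noncomputable def alphaNum (G : SimpleGraph V) : ℕ :=
  sSup {n | ∃ S : Finset V, IsStable G S ∧ S.card = n}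

/-- `S` is a maximum stable set of `G`. -/
def IsMaxStable (G : SimpleGraph V) (S : Finset V) : Prop :=
  IsStable G S ∧ S.card = alphaNum G

/-- `M` is a matching of `G`: a set of edges of `G`, pairwise non-incident. -/
def IsMatching (G : SimpleGraph V) (M : Finset (Sym2 V)) : Prop :=
  (∀ e ∈ M, e ∈ G.edgeSet) ∧
    ∀ e ∈ M, ∀ f ∈ M, e ≠ f → ∀ v : V, v ∈ e → v ∉ f

/-- The matching number `μ(G)`: maximum cardinality of a matching. -/
noncomputable def muNum (G : SimpleGraph V) : ℕ :=
  sSup {n | ∃ M : Finset (Sym2 V), IsMatching G M ∧ M.card = n}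

/-- A perfect matching: a matching covering every vertex. -/
def IsPerfectMatching (G : SimpleGraph V) (M : Finset (Sym2 V)) : Prop :=
  IsMatching G M ∧ ∀ v : V, ∃ e ∈ M, v ∈ e

/-- A maximal matching: a matching such that no edge of `G` can be added to it
while keeping pairwise non-incidence, i.e. every edge of `G` outside `M` is
incident to an edge of `M`. -/
def IsMaximalMatching (G : SimpleGraph V) (M : Finset (Sym2 V)) : Prop :=
  IsMatching G M ∧ ∀ e ∈ G.edgeSet, e ∉ M → ∃ f ∈ M, ∃ v : V, v ∈ e ∧ v ∈ f

/-- `G` is a König-Egerváry graph: `α(G) + μ(G) = |V(G)|`. -/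
def KonigEgervary (G : SimpleGraph V) [Fintype V] : Prop :=
  alphaNum G + muNum G = Fintype.card V

/-- `e` is an α-critical edge of `G`: `α(G - e) > α(G)`. -/
def IsAlphaCritical (G : SimpleGraph V) (e : Sym2 V) : Prop :=
  e ∈ G.edgeSet ∧ alphaNum G < alphaNum (G.deleteEdges {e})

/-- `e` is a μ-critical edge of `G`: `μ(G - e) < μ(G)`. -/
def IsMuCritical (G : SimpleGraph V) (e : Sym2 V) : Prop :=
  e ∈ G.edgeSet ∧ muNum (G.deleteEdges {e}) < muNum G

/-- `core(G)`: the set of vertices belonging to every maximum stable set of `G`. -/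
def core (G : SimpleGraph V) : Set V :=
  {v | ∀ S : Finset V, IsMaxStable G S → v ∈ S}

/-- `ξ(G) = |core(G)|`. -/
noncomputable def xi (G : SimpleGraph V) : ℕ := (core G).ncard

/-- `σ(G)`: the number of vertices belonging to no maximum stable set of `G`. -/
noncomputable def sigmaNum (G : SimpleGraph V) : ℕ :=
  {v : V | ∀ S : Finset V, IsMaxStable G S → v ∉ S}.ncard

/-- `η(G)`: the number of α-critical edges of `G`. -/
noncomputable def eta (G : SimpleGraph V) : ℕ :=
  {e : Sym2 V | IsAlphaCritical G e}.ncard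

/-- `N(A)`: the set of vertices adjacent to some vertex of `A`. -/
def nbhd (G : SimpleGraph V) (A : Set V) : Set V :=
  {v | ∃ a ∈ A, G.Adj a v}

/-- `N[A] = A ∪ N(A)`: the closed neighborhood of `A`. -/
def closedNbhd (G : SimpleGraph V) (A : Set V) : Set V :=
  A ∪ nbhd G A


-- auxiliary lemmas to test
lemma stable_card_le_alpha [Fintype V] (G : SimpleGraph V) {S : Finset V} (h : IsStable G S) :
    S.card ≤ alphaNum G :=
  le_csSup ⟨Fintype.card V, by rintro n ⟨T, -, rfl⟩; simpa using T.card_le_univ⟩ ⟨S, h, rfl⟩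

lemma exists_max_stable [Fintype V] (G : SimpleGraph V) :
    ∃ S : Finset V, IsMaxStable G S := by
  have h : alphaNum G ∈ {n | ∃ S : Finset V, IsStable G S ∧ S.card = n} := by
    apply Nat.sSup_mem ⟨0, show ∃ S : Finset V, IsStable G S ∧ S.card = 0 from ⟨∅, fun x hx => absurd hx (by simp), by simp⟩⟩
    exact ⟨Fintype.card V, by rintro n ⟨T, -, rfl⟩; simpa using T.card_le_univ⟩
  obtain ⟨S, h1, h2⟩ := h
  exact ⟨S, h1, h2⟩

lemma matching_card_le_mu [Fintype V] (G : SimpleGraph V) {M : Finset (Sym2 V)}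
    (h : IsMatching G M) : M.card ≤ muNum G :=
  le_csSup ⟨Fintype.card (Sym2 V), by rintro n ⟨T, -, rfl⟩; simpa using T.card_le_univ⟩ ⟨M, h, rfl⟩

lemma exists_max_matching [Fintype V] (G : SimpleGraph V) :
    ∃ M : Finset (Sym2 V), IsMatching G M ∧ M.card = muNum G := by
  have h : muNum G ∈ {n | ∃ M : Finset (Sym2 V), IsMatching G M ∧ M.card = n} := by
    apply Nat.sSup_mem ⟨0, show ∃ M : Finset (Sym2 V), IsMatching G M ∧ M.card = 0 from ⟨∅, ⟨by simp, by simp⟩, by simp⟩⟩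
    exact ⟨Fintype.card (Sym2 V), by rintro n ⟨T, -, rfl⟩; simpa using T.card_le_univ⟩
  exact h

lemma exists_endpoint_not_mem {G : SimpleGraph V} {S : Finset V} (hS : IsStable G S)
    {e : Sym2 V} (he : e ∈ G.edgeSet) : ∃ v, v ∈ e ∧ v ∉ S := by
  induction e using Sym2.ind with
  | _ x y =>
    rw [SimpleGraph.mem_edgeSet] at he
    by_contra h
    push_neg at h
    exact hS (h x (by simp)) (h y (by simp)) he

lemma alpha_add_mu_le [Fintype V] (G : SimpleGraph V) :
    alphaNum G + muNum G ≤ Fintype.card V := by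
  obtain ⟨S, hSst, hScard⟩ := exists_max_stable G
  obtain ⟨M, hM, hMcard⟩ := exists_max_matching G
  have hex : ∀ e : Sym2 V, ∃ v : V, e ∈ M → v ∈ e ∧ v ∉ S := by
    intro e
    by_cases he : e ∈ M
    · obtain ⟨v, hv⟩ := exists_endpoint_not_mem hSst (hM.1 e he)
      exact ⟨v, fun _ => hv⟩
    · induction e using Sym2.ind with
      | _ x y => exact ⟨x, fun h => absurd h he⟩
  choose f hf using hex
  have hinj : Set.InjOn f ↑M := by
    intro e he e' he' hfe
    by_contra hne
    exact hM.2 e he e' he' hne (f e) (hf e he).1 (hfe ▸ (hf e' he').1)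
  have hcard : M.card ≤ (Finset.univ \ S).card := by
    apply Finset.card_le_card_of_injOn f ?_ hinj
    intro e he
    simp [Finset.mem_sdiff, (hf e he).2]
  rw [Finset.card_sdiff_of_subset (Finset.subset_univ S), Finset.card_univ] at hcard
  have hSle : S.card ≤ Fintype.card V := by simpa using S.card_le_univ
  omega

lemma critical_mem_max_matching [Fintype V] {G : SimpleGraph V} (hG : KonigEgervary G)
    {e : Sym2 V} (he : IsAlphaCritical G e) {M : Finset (Sym2 V)} (hM : IsMatching G M)
    (hMcard : M.card = muNum G) : e ∈ M := by
  by_contra hem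
  have hM' : IsMatching (G.deleteEdges {e}) M := by
    refine ⟨fun f hf => ?_, hM.2⟩
    rw [SimpleGraph.edgeSet_deleteEdges]
    refine ⟨hM.1 f hf, ?_⟩
    simp only [Set.mem_singleton_iff]
    rintro rfl
    exact hem hf
  have h1 : muNum G ≤ muNum (G.deleteEdges {e}) := hMcard ▸ matching_card_le_mu _ hM'
  have h2 := he.2
  have h3 := alpha_add_mu_le (G.deleteEdges {e})
  rw [KonigEgervary] at hG
  omega

lemma critical_endpoints [Fintype V] {G : SimpleGraph V} {x y : V}
    (he : IsAlphaCritical G s(x, y)) :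
    (∃ T : Finset V, IsMaxStable G T ∧ x ∉ T ∧ y ∈ T) ∧
      (∃ T : Finset V, IsMaxStable G T ∧ y ∉ T ∧ x ∈ T) := by
  obtain ⟨T, hT, hTcard⟩ := exists_max_stable (G.deleteEdges {s(x, y)})
  have hne : x ≠ y := ((SimpleGraph.mem_edgeSet G).mp he.1).ne
  have hgt : alphaNum G < T.card := by rw [hTcard]; exact he.2
  have hadj : ∀ a ∈ T, ∀ b ∈ T, G.Adj a b → s(a, b) = s(x, y) := by
    intro a ha b hb hab
    by_contra h
    exact hT ha hb (by rw [SimpleGraph.deleteEdges_adj]; exact ⟨hab, by simpa using h⟩)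
  have hx : x ∈ T := by
    by_contra hxT
    have hst : IsStable G T := by
      intro a ha b hb hab
      have h := hadj a ha b hb hab
      rw [Sym2.eq_iff] at h
      rcases h with ⟨rfl, rfl⟩ | ⟨rfl, rfl⟩
      · exact hxT ha
      · exact hxT hb
    exact absurd (stable_card_le_alpha G hst) (by omega)
  have hy : y ∈ T := by
    by_contra hyT
    have hst : IsStable G T := by
      intro a ha b hb hab
      have h := hadj a ha b hb hab
      rw [Sym2.eq_iff] at h
      rcases h with ⟨rfl, rfl⟩ | ⟨rfl, rfl⟩
      · exact hyT hb
      · exact hyT ha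
    exact absurd (stable_card_le_alpha G hst) (by omega)
  have hstx : IsStable G (T.erase x) := by
    intro a ha b hb hab
    have h := hadj a (Finset.mem_of_mem_erase ha) b (Finset.mem_of_mem_erase hb) hab
    rw [Sym2.eq_iff] at h
    rcases h with ⟨rfl, rfl⟩ | ⟨rfl, rfl⟩
    · exact (Finset.ne_of_mem_erase ha) rfl
    · exact (Finset.ne_of_mem_erase hb) rfl
  have hsty : IsStable G (T.erase y) := by
    intro a ha b hb hab
    have h := hadj a (Finset.mem_of_mem_erase ha) b (Finset.mem_of_mem_erase hb) hab
    rw [Sym2.eq_iff] at h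
    rcases h with ⟨rfl, rfl⟩ | ⟨rfl, rfl⟩
    · exact (Finset.ne_of_mem_erase hb) rfl
    · exact (Finset.ne_of_mem_erase ha) rfl
  have hcx : (T.erase x).card = alphaNum G := by
    have hle := stable_card_le_alpha G hstx
    rw [Finset.card_erase_of_mem hx] at hle ⊢
    omega
  have hcy : (T.erase y).card = alphaNum G := by
    have hle := stable_card_le_alpha G hsty
    rw [Finset.card_erase_of_mem hy] at hle ⊢
    omega
  exact ⟨⟨T.erase x, ⟨hstx, hcx⟩, Finset.notMem_erase x T,
      Finset.mem_erase.mpr ⟨hne.symm, hy⟩⟩,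
    ⟨T.erase y, ⟨hsty, hcy⟩, Finset.notMem_erase y T,
      Finset.mem_erase.mpr ⟨hne, hx⟩⟩⟩

lemma critical_endpoint_mem [Fintype V] {G : SimpleGraph V} {e : Sym2 V}
    (he : IsAlphaCritical G e) {v : V} (hv : v ∈ e) :
    v ∉ core G ∧ ∃ T : Finset V, IsMaxStable G T ∧ v ∈ T := by
  induction e using Sym2.ind with
  | _ x y =>
    obtain ⟨⟨T1, hT1, hx1, hy1⟩, ⟨T2, hT2, hy2, hx2⟩⟩ := critical_endpoints he
    rcases Sym2.mem_iff.mp hv with rfl | rfl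
    · exact ⟨fun hc => hx1 (hc T1 hT1), T2, hT2, hx2⟩
    · exact ⟨fun hc => hy2 (hc T2 hT2), T1, hT1, hy1⟩


/-- In a König-Egerváry graph: `ξ + η ≤ α`, `σ + η ≤ μ`, and
`ξ + 2η + σ ≤ |V(G)|`. -/
theorem stmt_14 {V : Type*} [Fintype V] (G : SimpleGraph V)
    (hG : KonigEgervary G) :
    xi G + eta G ≤ alphaNum G ∧ sigmaNum G + eta G ≤ muNum G ∧
      xi G + 2 * eta G + sigmaNum G ≤ Fintype.card V := by
  classical
  obtain ⟨S, hSst, hScard⟩ := exists_max_stable G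
  obtain ⟨M, hM, hMcard⟩ := exists_max_matching G
  set C : Finset (Sym2 V) := Finset.univ.filter (fun e => IsAlphaCritical G e) with hC
  set coreF : Finset V := Finset.univ.filter (fun v => v ∈ core G) with hcoreF
  set A : Finset V := Finset.univ.filter
    (fun v => ∀ T : Finset V, IsMaxStable G T → v ∉ T) with hA
  have heta : eta G = C.card := by
    rw [eta]
    have h : {e : Sym2 V | IsAlphaCritical G e} = ↑C := by ext z; simp [hC]
    rw [h, Set.ncard_coe_finset]
  have hxi : xi G = coreF.card := by
    rw [xi]
    have h : core G = ↑coreF := by ext z; simp [hcoreF]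
    rw [h, Set.ncard_coe_finset]
  have hsig : sigmaNum G = A.card := by
    rw [sigmaNum]
    have h : {v : V | ∀ S : Finset V, IsMaxStable G S → v ∉ S} = ↑A := by
      ext z; simp [hA]
    rw [h, Set.ncard_coe_finset]
  have hCcrit : ∀ e ∈ C, IsAlphaCritical G e := by
    intro e he; rw [hC, Finset.mem_filter] at he; exact he.2
  have hCM : ∀ e ∈ C, e ∈ M := fun e he =>
    critical_mem_max_matching hG (hCcrit e he) hM hMcard
  -- f : endpoint outside S
  have hexf : ∀ e : Sym2 V, ∃ v : V, e ∈ M → v ∈ e ∧ v ∉ S := by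
    intro e
    by_cases he : e ∈ M
    · obtain ⟨v, hv⟩ := exists_endpoint_not_mem hSst (hM.1 e he)
      exact ⟨v, fun _ => hv⟩
    · induction e using Sym2.ind with
      | _ x y => exact ⟨x, fun h => absurd h he⟩
  choose f hf using hexf
  have hinjf : Set.InjOn f ↑M := by
    intro e he e' he' hfe
    by_contra hne
    exact hM.2 e he e' he' hne (f e) (hf e he).1 (hfe ▸ (hf e' he').1)
  have hVScard : (Finset.univ \ S).card = M.card := by
    rw [Finset.card_sdiff_of_subset (Finset.subset_univ S), Finset.card_univ, hScard, hMcard]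
    rw [KonigEgervary] at hG
    omega
  have himg : Finset.image f M = Finset.univ \ S := by
    apply Finset.eq_of_subset_of_card_le
    · intro v hv
      obtain ⟨e, he, rfl⟩ := Finset.mem_image.mp hv
      simp [(hf e he).2]
    · rw [Finset.card_image_of_injOn hinjf]
      exact le_of_eq hVScard
  have hinS : ∀ e ∈ M, ∃ v, v ∈ e ∧ v ∈ S := by
    intro e heM
    induction e using Sym2.ind with
    | _ x y =>
      have hxy : x ≠ y := ((SimpleGraph.mem_edgeSet G).mp (hM.1 _ heM)).ne
      by_contra hcon
      push_neg at hcon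
      have hfe := hf _ heM
      have hw : ∃ w, w ∈ s(x, y) ∧ w ≠ f s(x, y) := by
        rcases Sym2.mem_iff.mp hfe.1 with h | h
        · exact ⟨y, by simp, by rw [← h] at hxy; exact fun hh => hxy hh.symm⟩
        · exact ⟨x, by simp, by rw [← h] at hxy; exact hxy⟩
      obtain ⟨w, hwmem, hwne⟩ := hw
      have hwS : w ∈ Finset.univ \ S := by
        simp [hcon w hwmem]
      rw [← himg] at hwS
      obtain ⟨e', he', hfe'⟩ := Finset.mem_image.mp hwS
      rcases eq_or_ne e' s(x, y) with rfl | hne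
      · exact hwne hfe'.symm
      · exact (hM.2 e' he' _ heM hne w (hfe' ▸ (hf e' he').1)) hwmem
  -- g : endpoint inside S
  have hexg : ∀ e : Sym2 V, ∃ v : V, e ∈ M → v ∈ e ∧ v ∈ S := by
    intro e
    by_cases he : e ∈ M
    · obtain ⟨v, hv⟩ := hinS e he
      exact ⟨v, fun _ => hv⟩
    · induction e using Sym2.ind with
      | _ x y => exact ⟨x, fun h => absurd h he⟩
  choose g hg using hexg
  -- counting 1
  have key1 : C.card ≤ (S \ coreF).card := by
    apply Finset.card_le_card_of_injOn g
    · intro e heC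
      have heM := hCM e heC
      have hge := hg e heM
      have hprop := critical_endpoint_mem (hCcrit e heC) hge.1
      rw [Finset.mem_coe, Finset.mem_sdiff]
      refine ⟨hge.2, ?_⟩
      rw [hcoreF, Finset.mem_filter]
      exact fun h => hprop.1 h.2
    · intro e he e' he' hge
      by_contra hne
      exact hM.2 e (hCM e he) e' (hCM e' he') hne (g e) (hg _ (hCM e he)).1
        (hge ▸ (hg _ (hCM e' he')).1)
  -- counting 2
  have key2 : C.card ≤ ((Finset.univ \ S) \ A).card := by
    apply Finset.card_le_card_of_injOn f
    · intro e heC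
      have heM := hCM e heC
      have hfe := hf e heM
      have hprop := critical_endpoint_mem (hCcrit e heC) hfe.1
      rw [Finset.mem_coe, Finset.mem_sdiff]
      refine ⟨by simp [hfe.2], ?_⟩
      rw [hA, Finset.mem_filter]
      obtain ⟨T, hT, hvT⟩ := hprop.2
      exact fun h => (h.2 T hT) hvT
    · intro e he e' he' hfe
      by_contra hne
      exact hM.2 e (hCM e he) e' (hCM e' he') hne (f e) (hf _ (hCM e he)).1
        (hfe ▸ (hf _ (hCM e' he')).1)
  have hcoreS : coreF ⊆ S := by
    intro v hv
    rw [hcoreF, Finset.mem_filter] at hv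
    exact hv.2 S ⟨hSst, hScard⟩
  have hAS : A ⊆ Finset.univ \ S := by
    intro v hv
    rw [hA, Finset.mem_filter] at hv
    simp [hv.2 S ⟨hSst, hScard⟩]
  have hSsplit : (S \ coreF).card = S.card - coreF.card := Finset.card_sdiff_of_subset hcoreS
  have hAsplit : ((Finset.univ \ S) \ A).card = (Finset.univ \ S).card - A.card :=
    Finset.card_sdiff_of_subset hAS
  have hcoreleS : coreF.card ≤ S.card := Finset.card_le_card hcoreS
  have hAle : A.card ≤ (Finset.univ \ S).card := Finset.card_le_card hAS
  rw [KonigEgervary] at hG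
  refine ⟨?_, ?_, ?_⟩ <;> omega

end KEG
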